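/- Scattering length of the regularized homogeneous potential in 2D: for W_β^R(x) = (W₀/R^β) χ_{B(0,R)}(x) in ℝ², the zero-energy radial scattering solution is φ(r) = (R^{β/2−1}/√(W₀/2)) · I₀(√(W₀/2) R^{−β/2} r) / I₁(√(W₀/2) R^{1−β/2}) for 0 < r < R and φ(r) = ln(r / a_β^R) for r ≥ R, which satisfies φ'' + φ'/r = (1/2)W_β^R φ on (0,R) and matches in value and derivative at r = R, with 2D scattering length a_β^R = R · exp( −(R^{β/2−1}/√(W₀/2)) · I₀(√(W₀/2) R^{1−β/2}) / I₁(√(W₀/2) R^{1−β/2}) ). -/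

import Mathlib

open scoped Nat
open Filter

noncomputable def gI (x : ℝ) : ℝ := ∑' k : ℕ, x ^ k / ((k ! : ℝ)) ^ 2
noncomputable def hI (x : ℝ) : ℝ := ∑' k : ℕ, x ^ k / ((k ! : ℝ) * ((k+1)! : ℝ))
noncomputable def dhI (x : ℝ) : ℝ := ∑' k : ℕ, (k : ℝ) * x ^ (k - 1) / ((k ! : ℝ) * ((k+1)! : ℝ))

lemma fact_pos' (k : ℕ) : (0:ℝ) < (k ! : ℝ) := by exact_mod_cast k.factorial_pos
lemma one_le_fact (k : ℕ) : (1:ℝ) ≤ (k ! : ℝ) := by exact_mod_cast k.factorial_pos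
lemma fact_le_sq (k : ℕ) : (k ! : ℝ) ≤ ((k ! : ℝ))^2 := by nlinarith [fact_pos' k, one_le_fact k]
lemma fact_le_mul (k : ℕ) : (k ! : ℝ) ≤ (k ! : ℝ) * ((k+1)! : ℝ) :=
  le_mul_of_one_le_right (fact_pos' k).le (one_le_fact (k+1))

lemma summable_aux (x : ℝ) (D : ℕ → ℝ) (hD : ∀ k, (k ! : ℝ) ≤ D k) :
    Summable (fun k : ℕ => x ^ k / D k) := by
  apply Summable.of_norm_bounded (Real.summable_pow_div_factorial |x|)
  intro k
  have hD0 : (0:ℝ) < D k := lt_of_lt_of_le (fact_pos' k) (hD k)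
  rw [norm_div, norm_pow, Real.norm_eq_abs, Real.norm_eq_abs, abs_of_pos hD0]
  exact div_le_div₀ (by positivity) le_rfl (fact_pos' k) (hD k)

lemma summable_g (x : ℝ) : Summable (fun k : ℕ => x ^ k / ((k ! : ℝ)) ^ 2) :=
  summable_aux x _ fact_le_sq

lemma summable_h (x : ℝ) : Summable (fun k : ℕ => x ^ k / ((k ! : ℝ) * ((k+1)! : ℝ))) :=
  summable_aux x _ fact_le_mul

lemma deriv_bound (M : ℝ) (hM : 1 ≤ M) (y : ℝ) (hy : |y| ≤ M) (k : ℕ) (D : ℝ)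
    (hD : (k ! : ℝ) ≤ D) :
    ‖(k : ℝ) * y ^ (k - 1) / D‖ ≤ (2*M) ^ k / (k ! : ℝ) := by
  have hD0 : (0:ℝ) < D := lt_of_lt_of_le (fact_pos' k) hD
  rw [norm_div, norm_mul, Real.norm_eq_abs, Real.norm_eq_abs, Real.norm_eq_abs,
    abs_of_pos hD0, Nat.abs_cast, abs_pow]
  have h1 : (k:ℝ) ≤ 2^k := by exact_mod_cast (Nat.lt_two_pow_self (n := k)).le
  have h2 : |y| ^ (k-1) ≤ M ^ k := by
    calc |y| ^ (k-1) ≤ M ^ (k-1) := by gcongr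
    _ ≤ M ^ k := pow_le_pow_right₀ hM (Nat.sub_le k 1)
  have hnum : (k:ℝ) * |y| ^ (k-1) ≤ 2^k * M^k :=
    mul_le_mul h1 h2 (by positivity) (by positivity)
  calc (k:ℝ) * |y| ^ (k-1) / D ≤ 2^k * M^k / (k ! : ℝ) :=
        div_le_div₀ (by positivity) hnum (fact_pos' k) hD
    _ = (2*M)^k / (k ! : ℝ) := by rw [mul_pow]

lemma summable_dg (x : ℝ) : Summable (fun k : ℕ => (k:ℝ) * x ^ (k-1) / ((k ! : ℝ))^2) := by
  apply Summable.of_norm_bounded (Real.summable_pow_div_factorial (2*(|x|+1)))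
  intro k
  exact deriv_bound (|x|+1) (by linarith [abs_nonneg x]) x (by linarith [abs_nonneg x]) k _ (fact_le_sq k)

lemma hasDerivAt_gI (x : ℝ) : HasDerivAt gI (hI x) x := by
  set M := |x| + 1 with hMdef
  have hM : 1 ≤ M := by linarith [abs_nonneg x]
  have hxM : x ∈ Metric.ball (0:ℝ) M := by
    simp only [Metric.mem_ball, Real.dist_eq, sub_zero, hMdef]
    linarith [abs_nonneg x]
  have key : HasDerivAt (fun z => ∑' k : ℕ, z ^ k / ((k ! : ℝ))^2)
      (∑' k : ℕ, (k:ℝ) * x ^ (k-1) / ((k ! : ℝ))^2) x := by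
    apply hasDerivAt_tsum_of_isPreconnected (Real.summable_pow_div_factorial (2*M))
      Metric.isOpen_ball (convex_ball (0:ℝ) M).isPreconnected
      (fun k y _ => (hasDerivAt_pow k y).div_const _) ?_ hxM (summable_g x) hxM
    intro k y hy
    simp only [Metric.mem_ball, Real.dist_eq, sub_zero] at hy
    exact deriv_bound M hM y hy.le k _ (fact_le_sq k)
  have heq : (∑' k : ℕ, (k:ℝ) * x ^ (k-1) / ((k ! : ℝ))^2) = hI x := by
    rw [Summable.tsum_eq_zero_add (summable_dg x)]
    simp only [Nat.cast_zero, zero_mul, zero_div, zero_add, hI]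
    apply tsum_congr
    intro k
    have hfs : ((k+1)! : ℝ) = ((k:ℝ)+1) * (k ! : ℝ) := by
      push_cast [Nat.factorial_succ]; ring
    rw [Nat.add_sub_cancel, hfs]
    have h0 : (k ! : ℝ) ≠ 0 := (fact_pos' k).ne'
    have h1 : ((k:ℝ)+1) ≠ 0 := by positivity
    push_cast
    field_simp
  rw [heq] at key
  exact key

lemma hasDerivAt_hI (x : ℝ) : HasDerivAt hI (dhI x) x := by
  set M := |x| + 1 with hMdef
  have hM : 1 ≤ M := by linarith [abs_nonneg x]
  have hxM : x ∈ Metric.ball (0:ℝ) M := by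
    simp only [Metric.mem_ball, Real.dist_eq, sub_zero, hMdef]
    linarith [abs_nonneg x]
  apply hasDerivAt_tsum_of_isPreconnected (Real.summable_pow_div_factorial (2*M))
    Metric.isOpen_ball (convex_ball (0:ℝ) M).isPreconnected
    (fun k y _ => (hasDerivAt_pow k y).div_const _) ?_ hxM (summable_h x) hxM
  intro k y hy
  simp only [Metric.mem_ball, Real.dist_eq, sub_zero] at hy
  exact deriv_bound M hM y hy.le k _ (fact_le_mul k)

lemma x_dhI (x : ℝ) : x * dhI x = gI x - hI x := by
  rw [dhI, ← tsum_mul_left]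
  have h1 : ∀ k : ℕ, x * ((k:ℝ) * x ^ (k-1) / ((k ! : ℝ) * ((k+1)! : ℝ)))
      = (k:ℝ) * x ^ k / ((k ! : ℝ) * ((k+1)! : ℝ)) := by
    intro k
    cases k with
    | zero => simp
    | succ n =>
      rw [Nat.add_sub_cancel]
      push_cast
      rw [pow_succ]
      ring
  rw [tsum_congr h1, gI, hI, ← Summable.tsum_sub (summable_g x) (summable_h x)]
  apply tsum_congr
  intro k
  have hfs : ((k+1)! : ℝ) = ((k:ℝ)+1) * (k ! : ℝ) := by
    push_cast [Nat.factorial_succ]; ring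
  have h0 : (k ! : ℝ) ≠ 0 := (fact_pos' k).ne'
  have h1 : ((k:ℝ)+1) ≠ 0 := by positivity
  rw [hfs]
  field_simp
  ring

/-- The modified Bessel function of the first kind of order 0,
`I₀(t) = ∑_k (t²/4)^k / (k!)²`. -/
noncomputable def besselI0 (t : ℝ) : ℝ :=
  ∑' k : ℕ, (t ^ 2 / 4) ^ k / ((Nat.factorial k : ℝ)) ^ 2

/-- The modified Bessel function of the first kind of order 1,
`I₁(t) = (t/2) ∑_k (t²/4)^k / (k!(k+1)!)`. -/
noncomputable def besselI1 (t : ℝ) : ℝ :=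
  t / 2 * ∑' k : ℕ, (t ^ 2 / 4) ^ k / ((Nat.factorial k : ℝ) * (Nat.factorial (k + 1) : ℝ))

lemma besselI0_eq (t : ℝ) : besselI0 t = gI (t^2/4) := rfl
lemma besselI1_eq (t : ℝ) : besselI1 t = t/2 * hI (t^2/4) := rfl

lemma hasDerivAt_sq4 (t : ℝ) : HasDerivAt (fun t : ℝ => t^2/4) (t/2) t := by
  have := (hasDerivAt_pow 2 t).div_const 4
  refine this.congr_deriv (Eq.symm ?_)
  norm_num
  ring

lemma hasDerivAt_besselI0 (t : ℝ) : HasDerivAt besselI0 (besselI1 t) t := by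
  have h := (hasDerivAt_gI (t^2/4)).comp t (hasDerivAt_sq4 t)
  have : besselI0 = fun t : ℝ => gI (t^2/4) := rfl
  rw [this, besselI1_eq]
  refine h.congr_deriv (Eq.symm ?_)
  ring

lemma hasDerivAt_besselI1 (t : ℝ) :
    HasDerivAt besselI1 (besselI0 t - hI (t^2/4) / 2) t := by
  have h1 : HasDerivAt (fun t : ℝ => t/2) (1/2 : ℝ) t := (hasDerivAt_id t).div_const 2
  have h2 := (hasDerivAt_hI (t^2/4)).comp t (hasDerivAt_sq4 t)
  have h := h1.mul h2
  have : besselI1 = fun t : ℝ => (t/2) * hI (t^2/4) := rfl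
  rw [this, besselI0_eq]
  refine h.congr_deriv (Eq.symm ?_)
  simp only [Function.comp_apply]
  linear_combination - x_dhI (t^2/4)

lemma hasDerivAt_besselI1' {t : ℝ} (ht : t ≠ 0) :
    HasDerivAt besselI1 (besselI0 t - besselI1 t / t) t := by
  have h := hasDerivAt_besselI1 t
  convert h using 1
  rw [besselI1_eq]
  field_simp

lemma hI_ge_one {x : ℝ} (hx : 0 ≤ x) : 1 ≤ hI x := by
  have h0 : (fun k : ℕ => x ^ k / ((k ! : ℝ) * ((k+1)! : ℝ))) 0 = 1 := by norm_num
  have := Summable.le_tsum (summable_h x) 0 (fun j _ => by positivity)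
  rw [hI]
  simpa using this

lemma besselI1_pos {t : ℝ} (ht : 0 < t) : 0 < besselI1 t := by
  rw [besselI1_eq]
  have h := hI_ge_one (x := t^2/4) (by positivity)
  nlinarith

lemma differentiable_besselI1 : Differentiable ℝ besselI1 :=
  fun t => (hasDerivAt_besselI1 t).differentiableAt
lemma continuous_besselI1 : Continuous besselI1 := differentiable_besselI1.continuous

lemma master (A c R aa : ℝ) (hc : 0 < c) (hR : 0 < R) (haa : 0 < aa)
    (ph : ℝ → ℝ)
    (hph : ph = fun r => if r < R then A * besselI0 (c * r) else Real.log (r / aa))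
    (hmatch : A * besselI0 (c * R) = Real.log (R / aa))
    (hdmatch : A * (besselI1 (c * R) * c) = 1 / R) :
    ContinuousOn ph (Set.Ioi 0) ∧ DifferentiableOn ℝ ph (Set.Ioi 0) ∧
    ContinuousAt ph R ∧ ContinuousAt (deriv ph) R ∧
    (∀ r ∈ Set.Ioo 0 R, deriv (deriv ph) r + deriv ph r / r = (c * c) * ph r) ∧
    (∀ r : ℝ, R ≤ r → ph r = Real.log (r / aa)) := by
  have eqIio : ∀ x : ℝ, x < R → ph x = A * besselI0 (c * x) := by
    intro x hx; rw [hph]; simp only [if_pos hx]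
  have eqIci : ∀ x : ℝ, R ≤ x → ph x = Real.log (x / aa) := by
    intro x hx; rw [hph]; simp only [if_neg (not_lt.mpr hx)]
  have phR : ph R = Real.log (R / aa) := eqIci R le_rfl
  have hf : ∀ r : ℝ, HasDerivAt (fun x => A * besselI0 (c * x))
      (A * (besselI1 (c * r) * c)) r := by
    intro r
    simpa using (((hasDerivAt_besselI0 (c * r)).comp r
      ((hasDerivAt_id r).const_mul c)).const_mul A)
  have hL : ∀ r : ℝ, 0 < r → HasDerivAt (fun x => Real.log (x / aa)) (1 / r) r := by
    intro r hr
    have h1 : HasDerivAt (fun x : ℝ => x / aa) (1 / aa) r := by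
      simpa using (hasDerivAt_id r).div_const aa
    have h2 := (Real.hasDerivAt_log (div_ne_zero hr.ne' haa.ne')).comp r h1
    refine h2.congr_deriv (Eq.symm ?_)
    field_simp
  have hd_lt : ∀ r : ℝ, r < R → HasDerivAt ph (A * (besselI1 (c * r) * c)) r := by
    intro r hr
    apply (hf r).congr_of_eventuallyEq
    filter_upwards [Iio_mem_nhds hr] with x hx using eqIio x hx
  have hd_gt : ∀ r : ℝ, R < r → HasDerivAt ph (1 / r) r := by
    intro r hr
    apply (hL r (hR.trans hr)).congr_of_eventuallyEq
    filter_upwards [Ioi_mem_nhds hr] with x hx using eqIci x hx.le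
  have hd_R : HasDerivAt ph (1 / R) R := by
    have left : HasDerivWithinAt ph (1 / R) (Set.Iic R) R := by
      have h := (hf R).hasDerivWithinAt (s := Set.Iic R)
      rw [hdmatch] at h
      apply h.congr
      · intro x hx
        rcases (Set.mem_Iic.mp hx).eq_or_lt with h' | h'
        · rw [h', phR, ← hmatch]
        · exact eqIio x h'
      · rw [phR, ← hmatch]
    have right : HasDerivWithinAt ph (1 / R) (Set.Ici R) R := by
      have h := (hL R hR).hasDerivWithinAt (s := Set.Ici R)
      exact h.congr (fun x hx => eqIci x hx) phR
    have := left.union right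
    rw [Set.Iic_union_Ici, hasDerivWithinAt_univ] at this
    exact this
  have hdiff : ∀ r ∈ Set.Ioi (0:ℝ), DifferentiableAt ℝ ph r := by
    intro r hr
    rcases lt_trichotomy r R with h | h | h
    · exact (hd_lt r h).differentiableAt
    · exact h ▸ hd_R.differentiableAt
    · exact (hd_gt r h).differentiableAt
  have dph_lt : ∀ r : ℝ, r < R → deriv ph r = A * (besselI1 (c * r) * c) :=
    fun r hr => (hd_lt r hr).deriv
  have dph_gt : ∀ r : ℝ, R < r → deriv ph r = 1 / r := fun r hr => (hd_gt r hr).deriv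
  have dph_R : deriv ph R = 1 / R := hd_R.deriv
  refine ⟨fun r hr => ((hdiff r hr).continuousAt).continuousWithinAt,
    fun r hr => (hdiff r hr).differentiableWithinAt,
    hd_R.differentiableAt.continuousAt, ?_, ?_, eqIci⟩
  · -- continuity of the derivative at R
    rw [ContinuousAt, dph_R]
    have hcontf : Continuous fun x : ℝ => A * (besselI1 (c * x) * c) :=
      continuous_const.mul ((continuous_besselI1.comp
        (continuous_const.mul continuous_id)).mul continuous_const)
    have hleft : Filter.Tendsto (deriv ph) (nhdsWithin R (Set.Iic R)) (nhds (1 / R)) := by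
      have h1 : Filter.Tendsto (fun x : ℝ => A * (besselI1 (c * x) * c))
          (nhdsWithin R (Set.Iic R)) (nhds (1 / R)) := by
        rw [← hdmatch]
        exact (hcontf.tendsto R).mono_left nhdsWithin_le_nhds
      apply h1.congr'
      filter_upwards [self_mem_nhdsWithin] with x (hx : x ≤ R)
      rcases eq_or_lt_of_le hx with h' | h'
      · rw [h', dph_R, hdmatch]
      · exact (dph_lt x h').symm
    have hright : Filter.Tendsto (deriv ph) (nhdsWithin R (Set.Ioi R)) (nhds (1 / R)) := by
      have h1 : Filter.Tendsto (fun x : ℝ => 1 / x)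
          (nhdsWithin R (Set.Ioi R)) (nhds (1 / R)) :=
        ((continuousAt_const.div continuousAt_id hR.ne').tendsto).mono_left nhdsWithin_le_nhds
      apply h1.congr'
      filter_upwards [self_mem_nhdsWithin] with x (hx : R < x) using (dph_gt x hx).symm
    have := hleft.sup hright
    rwa [nhdsLE_sup_nhdsGT] at this
  · -- the ODE
    rintro r ⟨hr0, hrR⟩
    have hcr : c * r ≠ 0 := (mul_pos hc hr0).ne'
    have hev : deriv ph =ᶠ[nhds r] fun x => A * (besselI1 (c * x) * c) := by
      filter_upwards [Iio_mem_nhds hrR] with x hx using dph_lt x hx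
    have hd2 : HasDerivAt (fun x => A * (besselI1 (c * x) * c))
        (A * ((besselI0 (c * r) - besselI1 (c * r) / (c * r)) * c * c)) r := by
      have h := (hasDerivAt_besselI1' hcr).comp r ((hasDerivAt_id r).const_mul c)
      have h2 := (h.mul_const c).const_mul A
      refine h2.congr_deriv (Eq.symm ?_)
      ring
    have hdd : deriv (deriv ph) r
        = A * ((besselI0 (c * r) - besselI1 (c * r) / (c * r)) * c * c) :=
      (hd2.congr_of_eventuallyEq hev).deriv
    rw [hdd, dph_lt r hrR, eqIio r hrR]
    field_simp
    ring

/-- The 2D scattering length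
`a_β^R = R·exp(−(R^{β/2−1}/√(W₀/2))·I₀(√(W₀/2)R^{1−β/2})/I₁(√(W₀/2)R^{1−β/2}))`
of the regularized potential `W_β^R = (W₀/R^β)χ_{B(0,R)}`. -/
noncomputable def aScat2D (W₀ R β : ℝ) : ℝ :=
  R * Real.exp (-(R ^ (β / 2 - 1) / Real.sqrt (W₀ / 2) *
    (besselI0 (Real.sqrt (W₀ / 2) * R ^ (1 - β / 2)) /
      besselI1 (Real.sqrt (W₀ / 2) * R ^ (1 - β / 2)))))

/-- The zero-energy radial scattering solution of the regularized potential in 2D. -/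
noncomputable def phiScat2D (W₀ R β : ℝ) : ℝ → ℝ := fun r =>
  if r < R then
    R ^ (β / 2 - 1) / Real.sqrt (W₀ / 2) *
      (besselI0 (Real.sqrt (W₀ / 2) * R ^ (-(β / 2)) * r) /
        besselI1 (Real.sqrt (W₀ / 2) * R ^ (1 - β / 2)))
  else Real.log (r / aScat2D W₀ R β)

/-- Scattering solution for the regularized homogeneous potential in 2D: `φ` as above is
continuous on `(0,∞)`, differentiable on `(0,∞)` with value and derivative matching at `R`,
satisfies `φ'' + φ'/r = (1/2)(W₀/R^β)φ` on `(0,R)`, and `φ(r) = ln(r/a_β^R)` for `r ≥ R`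
with `a_β^R` the stated 2D scattering length. -/
theorem statement18 (W₀ R β : ℝ) (hW₀ : 0 < W₀) (hR : 0 < R) (hβ : 0 < β) :
    ContinuousOn (phiScat2D W₀ R β) (Set.Ioi 0) ∧
    DifferentiableOn ℝ (phiScat2D W₀ R β) (Set.Ioi 0) ∧
    ContinuousAt (phiScat2D W₀ R β) R ∧
    ContinuousAt (deriv (phiScat2D W₀ R β)) R ∧
    (∀ r ∈ Set.Ioo 0 R,
      deriv (deriv (phiScat2D W₀ R β)) r + deriv (phiScat2D W₀ R β) r / r
        = 1 / 2 * (W₀ / R ^ β) * phiScat2D W₀ R β r) ∧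
    (∀ r : ℝ, R ≤ r → phiScat2D W₀ R β r = Real.log (r / aScat2D W₀ R β)) := by
  have hW2 : (0:ℝ) < W₀ / 2 := by linarith
  set s := Real.sqrt (W₀ / 2) with hs_def
  have hs : 0 < s := Real.sqrt_pos.mpr hW2
  have hss : s * s = W₀ / 2 := Real.mul_self_sqrt hW2.le
  set c : ℝ := s * R ^ (-(β / 2)) with hc_def
  have hc : 0 < c := mul_pos hs (Real.rpow_pos_of_pos hR _)
  have hTc : c * R = s * R ^ (1 - β / 2) := by
    rw [hc_def, show (1 - β / 2) = -(β / 2) + 1 by ring, Real.rpow_add hR, Real.rpow_one]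
    ring
  have hI1T : 0 < besselI1 (s * R ^ (1 - β / 2)) :=
    besselI1_pos (mul_pos hs (Real.rpow_pos_of_pos hR _))
  set A : ℝ := R ^ (β / 2 - 1) / s / besselI1 (s * R ^ (1 - β / 2)) with hA_def
  have ha : 0 < aScat2D W₀ R β := by
    rw [aScat2D]; positivity
  have hph : phiScat2D W₀ R β
      = fun r => if r < R then A * besselI0 (c * r) else Real.log (r / aScat2D W₀ R β) := by
    funext r
    simp only [phiScat2D, ← hs_def, ← hc_def, hA_def]
    by_cases h : r < R
    · rw [if_pos h, if_pos h]
      ring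
    · rw [if_neg h, if_neg h]
  have hpow : R ^ (β / 2 - 1) * R ^ (-(β / 2)) = 1 / R := by
    rw [← Real.rpow_add hR, show β / 2 - 1 + -(β / 2) = -1 by ring, Real.rpow_neg_one,
      one_div]
  have hdmatch : A * (besselI1 (c * R) * c) = 1 / R := by
    rw [hTc]
    have h1 : A * besselI1 (s * R ^ (1 - β / 2)) = R ^ (β / 2 - 1) / s := by
      rw [hA_def]; exact div_mul_cancel₀ _ hI1T.ne'
    calc A * (besselI1 (s * R ^ (1 - β / 2)) * c)
        = (A * besselI1 (s * R ^ (1 - β / 2))) * c := by ring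
      _ = R ^ (β / 2 - 1) / s * (s * R ^ (-(β / 2))) := by rw [h1, hc_def]
      _ = R ^ (β / 2 - 1) * R ^ (-(β / 2)) := by
          field_simp
      _ = 1 / R := hpow
  have hmatch : A * besselI0 (c * R) = Real.log (R / aScat2D W₀ R β) := by
    rw [hTc, Real.log_div hR.ne' ha.ne', aScat2D, ← hs_def,
      Real.log_mul hR.ne' (Real.exp_pos _).ne', Real.log_exp, hA_def]
    ring
  have hc2 : c * c = 1 / 2 * (W₀ / R ^ β) := by
    have hRβ : R ^ (-(β / 2)) * R ^ (-(β / 2)) = (R ^ β)⁻¹ := by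
      rw [← Real.rpow_add hR, show -(β / 2) + -(β / 2) = -β by ring, Real.rpow_neg hR.le]
    calc c * c = (s * s) * (R ^ (-(β / 2)) * R ^ (-(β / 2))) := by rw [hc_def]; ring
      _ = (W₀ / 2) * (R ^ β)⁻¹ := by rw [hss, hRβ]
      _ = 1 / 2 * (W₀ / R ^ β) := by ring
  obtain ⟨h1, h2, h3, h4, h5, h6⟩ :=
    master A c R (aScat2D W₀ R β) hc hR ha (phiScat2D W₀ R β) hph hmatch hdmatch
  exact ⟨h1, h2, h3, h4, fun r hr => by rw [h5 r hr, hc2], h6⟩
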